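/- Fix integers n ≥ 2, N ≥ 1, κ ≥ 1, maps f : ℝ^(2n−1) × ℝ → ℝ and ĉ : ℝ × ℝ^(2n−1) → ℝ, a dataset of triples (y_i⁺, ζ_i, u_i) ∈ ℝ × ℝ^(2n−1) × ℝ, i = 1,…,N, δ > 0, and a class-K∞ function γ such that ‖ζ_i⁺ − Φ(ζ, y_i⁺)‖ ≤ γ(‖ζ_i − ζ‖) for every i and every ζ ∈ ℝ^(2n−1). Suppose sets A⁰, …, A^κ ⊆ ℝ^(2n−1) are constructed as: A⁰ = ⋃_{i ∈ I₀} B̄(ζ_i⁺, r⁰_i) with B̄(ζ_i⁺, r⁰_i) ⊆ S_δ for each i ∈ I₀; and for 1 ≤ j ≤ κ, A^j = ⋃_{i ∈ I_j} B̄(ζ_i, γ⁻¹(r^j_i)) with B̄(ζ_i⁺, r^j_i) ⊆ A^{j−1} for each i ∈ I_j, where I₀,…,I_κ ⊆ {1,…,N} and all radii are nonnegative. Then for every ζ₀ ∈ A^κ there exist indices i₁ ∈ I_κ, i₂ ∈ I_{κ−1}, …, i_κ ∈ I₁ such that ζ₀ ∈ B̄(ζ_{i₁}, γ⁻¹(r^κ_{i₁})),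 and the closed-loop trajectory ζ_l := Φ(ζ_{l−1}, y_{i_l}⁺), l = 1,…,κ, satisfies ζ_l ∈ B̄(ζ_{i_l}⁺, r^{κ−l+1}_{i_l}) ⊆ A^{κ−l} for every l; in particular |(ζ_κ)ₙ| ≤ δ. -/

import Mathlib

/-- The closed-loop one-step map with reference `yr`:
`Φ(ζ, yr) = (y₂,…,yₙ, f(ζ, ĉ(yr, ζ)), u₂,…,u_{n−1}, ĉ(yr, ζ))` for the augmented
state `ζ = (y₁,…,yₙ,u₁,…,u_{n−1}) ∈ ℝ^(2n−1)` (0-indexed coordinates). -/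
noncomputable def Phi (n : ℕ) (f : EuclideanSpace ℝ (Fin (2*n-1)) → ℝ → ℝ)
    (chat : ℝ → EuclideanSpace ℝ (Fin (2*n-1)) → ℝ)
    (ζ : EuclideanSpace ℝ (Fin (2*n-1))) (yr : ℝ) : EuclideanSpace ℝ (Fin (2*n-1)) :=
  WithLp.toLp 2 fun k =>
    if (k : ℕ) = n - 1 then f ζ (chat yr ζ)
    else if h : (k : ℕ) = 2*n - 2 then chat yr ζ
    else ζ ⟨(k : ℕ) + 1, by have := k.isLt; omega⟩

/-- For a data triple `(y_i⁺, ζ_i, u_i)`, the shifted successor state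
`ζ_i⁺ = (y_{i,2},…,y_{i,n}, y_i⁺, u_{i,2},…,u_{i,n−1}, u_i)`. -/
noncomputable def zplus (n : ℕ) (yp : ℝ) (ζ : EuclideanSpace ℝ (Fin (2*n-1))) (ui : ℝ) :
    EuclideanSpace ℝ (Fin (2*n-1)) :=
  WithLp.toLp 2 fun k =>
    if (k : ℕ) = n - 1 then yp
    else if h : (k : ℕ) = 2*n - 2 then ui
    else ζ ⟨(k : ℕ) + 1, by have := k.isLt; omega⟩

/-- Backward reachable set `R⁻(A) = {ζ : ∃ i, Φ(ζ, y_i⁺) ∈ A}`. -/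
def Rminus (n N : ℕ) (f : EuclideanSpace ℝ (Fin (2*n-1)) → ℝ → ℝ)
    (chat : ℝ → EuclideanSpace ℝ (Fin (2*n-1)) → ℝ) (yd : Fin N → ℝ)
    (A : Set (EuclideanSpace ℝ (Fin (2*n-1)))) : Set (EuclideanSpace ℝ (Fin (2*n-1))) :=
  {ζ | ∃ i : Fin N, Phi n f chat ζ (yd i) ∈ A}

/-- `S_δ = {ζ : |ζₙ| ≤ δ}` (the n-th coordinate is index `n-1`, 0-indexed). -/
def Sdelta (n : ℕ) (hn : 1 ≤ n) (δ : ℝ) : Set (EuclideanSpace ℝ (Fin (2*n-1))) :=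
  {ζ | |ζ ⟨n - 1, by omega⟩| ≤ δ}

/-- Theorem 1: for the explicitly constructed sets
`A⁰ = ⋃_{i∈I₀} B̄(ζ_i⁺, r⁰_i) ⊆ S_δ` and `A^j = ⋃_{i∈I_j} B̄(ζ_i, γ⁻¹(r^j_i))`
(with `B̄(ζ_i⁺, r^j_i) ⊆ A^{j−1}`), from any `ζ₀ ∈ A^κ` one can select reference
indices `i₁ ∈ I_κ, …, i_κ ∈ I₁` so that the closed-loop trajectory satisfies
`ζ_l ∈ B̄(ζ_{i_l}⁺, r^{κ−l+1}_{i_l}) ⊆ A^{κ−l}`; in particular `|(ζ_κ)ₙ| ≤ δ`. -/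
theorem stmt_7 (n N κ : ℕ) (hn : 2 ≤ n) (hN : 1 ≤ N) (hκ : 1 ≤ κ)
    (f : EuclideanSpace ℝ (Fin (2*n-1)) → ℝ → ℝ)
    (chat : ℝ → EuclideanSpace ℝ (Fin (2*n-1)) → ℝ)
    (yd : Fin N → ℝ) (ζd : Fin N → EuclideanSpace ℝ (Fin (2*n-1))) (ud : Fin N → ℝ)
    (δ : ℝ) (hδ : 0 < δ)
    (γ γinv : ℝ → ℝ)
    (hγ_cont : ContinuousOn γ (Set.Ici (0:ℝ)))
    (hγ_mono : StrictMonoOn γ (Set.Ici (0:ℝ)))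
    (hγ_zero : γ 0 = 0)
    (hγ_top : Filter.Tendsto γ Filter.atTop Filter.atTop)
    (hγinv_nonneg : ∀ r, 0 ≤ r → 0 ≤ γinv r)
    (hγinv_right : ∀ r, 0 ≤ r → γ (γinv r) = r)
    (hγinv_left : ∀ s, 0 ≤ s → γinv (γ s) = s)
    (hγ_bound : ∀ (i : Fin N) (ζ : EuclideanSpace ℝ (Fin (2*n-1))),
      ‖zplus n (yd i) (ζd i) (ud i) - Phi n f chat ζ (yd i)‖ ≤ γ ‖ζd i - ζ‖)
    (A : ℕ → Set (EuclideanSpace ℝ (Fin (2*n-1))))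
    (I : ℕ → Set (Fin N)) (r : ℕ → Fin N → ℝ)
    (hr : ∀ j i, 0 ≤ r j i)
    (hA0 : A 0 = ⋃ i ∈ I 0, Metric.closedBall (zplus n (yd i) (ζd i) (ud i)) (r 0 i))
    (hball0 : ∀ i ∈ I 0,
      Metric.closedBall (zplus n (yd i) (ζd i) (ud i)) (r 0 i) ⊆ Sdelta n (by omega) δ)
    (hAj : ∀ j : ℕ, 1 ≤ j → j ≤ κ →
      A j = ⋃ i ∈ I j, Metric.closedBall (ζd i) (γinv (r j i)))
    (hballj : ∀ j : ℕ, 1 ≤ j → j ≤ κ → ∀ i ∈ I j,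
      Metric.closedBall (zplus n (yd i) (ζd i) (ud i)) (r j i) ⊆ A (j - 1)) :
    ∀ ζ0 ∈ A κ, ∃ (idx : ℕ → Fin N) (traj : ℕ → EuclideanSpace ℝ (Fin (2*n-1))),
      traj 0 = ζ0 ∧
      (∀ l : ℕ, traj (l+1) = Phi n f chat (traj l) (yd (idx (l+1)))) ∧
      idx 1 ∈ I κ ∧
      ζ0 ∈ Metric.closedBall (ζd (idx 1)) (γinv (r κ (idx 1))) ∧
      (∀ l : ℕ, 1 ≤ l → l ≤ κ →
        idx l ∈ I (κ - l + 1) ∧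
        traj l ∈ Metric.closedBall
          (zplus n (yd (idx l)) (ζd (idx l)) (ud (idx l))) (r (κ - l + 1) (idx l)) ∧
        Metric.closedBall
          (zplus n (yd (idx l)) (ζd (idx l)) (ud (idx l))) (r (κ - l + 1) (idx l))
          ⊆ A (κ - l)) ∧
      |traj κ ⟨n - 1, by omega⟩| ≤ δ := by
  intro ζ0 hζ0
  haveI : Nonempty (Fin N) := ⟨⟨0, hN⟩⟩
  -- key contraction lemma
  have key : ∀ (j : ℕ) (i : Fin N) (ζ : EuclideanSpace ℝ (Fin (2*n-1))),
      ζ ∈ Metric.closedBall (ζd i) (γinv (r j i)) →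
      Phi n f chat ζ (yd i) ∈
        Metric.closedBall (zplus n (yd i) (ζd i) (ud i)) (r j i) := by
    intro j i ζ hζ
    rw [Metric.mem_closedBall] at hζ ⊢
    have h2 : ‖ζd i - ζ‖ ≤ γinv (r j i) := by
      rw [← dist_eq_norm, dist_comm]; exact hζ
    calc dist (Phi n f chat ζ (yd i)) (zplus n (yd i) (ζd i) (ud i))
        = ‖zplus n (yd i) (ζd i) (ud i) - Phi n f chat ζ (yd i)‖ := by
          rw [dist_comm, dist_eq_norm]
      _ ≤ γ ‖ζd i - ζ‖ := hγ_bound i ζ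
      _ ≤ γ (γinv (r j i)) := hγ_mono.monotoneOn (Set.mem_Ici.2 (norm_nonneg _))
          (Set.mem_Ici.2 (hγinv_nonneg _ (hr j i))) h2
      _ = r j i := hγinv_right _ (hr j i)
  have step : ∀ (j : ℕ) (ζ : EuclideanSpace ℝ (Fin (2*n-1))), ∃ i : Fin N,
      (1 ≤ j → j ≤ κ → ζ ∈ A j →
        i ∈ I j ∧ ζ ∈ Metric.closedBall (ζd i) (γinv (r j i))) := by
    intro j ζ
    by_cases h : 1 ≤ j ∧ j ≤ κ ∧ ζ ∈ A j
    · obtain ⟨h1, h2, h3⟩ := h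
      rw [hAj j h1 h2] at h3
      rw [Set.mem_iUnion₂] at h3
      obtain ⟨i, hi, hb⟩ := h3
      exact ⟨i, fun _ _ _ => ⟨hi, hb⟩⟩
    · exact ⟨Classical.arbitrary _, fun h1 h2 h3 => absurd ⟨h1, h2, h3⟩ h⟩
  choose F hF using step
  set traj : ℕ → EuclideanSpace ℝ (Fin (2*n-1)) :=
    fun l => Nat.rec ζ0 (fun m t => Phi n f chat t (yd (F (κ - m) t))) l with htrajdef
  set idx : ℕ → Fin N := fun l => F (κ - (l - 1)) (traj (l - 1)) with hidxdef
  have hsucc : ∀ l : ℕ, traj (l + 1) = Phi n f chat (traj l) (yd (F (κ - l) (traj l))) :=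
    fun l => rfl
  have hidx : ∀ l : ℕ, idx (l + 1) = F (κ - l) (traj l) := fun l => rfl
  have htraj : ∀ l : ℕ, l ≤ κ → traj l ∈ A (κ - l) := by
    intro l
    induction l with
    | zero => intro _; exact hζ0
    | succ m ih =>
      intro hm
      have hmκ : m < κ := by omega
      have hAm : traj m ∈ A (κ - m) := ih (by omega)
      obtain ⟨hi, hb⟩ := hF (κ - m) (traj m) (by omega) (by omega) hAm
      have hmem := key (κ - m) (F (κ - m) (traj m)) (traj m) hb
      rw [← hsucc] at hmem
      have hsub := hballj (κ - m) (by omega) (by omega) _ hi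
      have : traj (m + 1) ∈ A (κ - m - 1) := hsub hmem
      rwa [show κ - m - 1 = κ - (m + 1) from by omega] at this
  refine ⟨idx, traj, rfl, fun l => by rw [hsucc l, hidx l], ?_, ?_, ?_, ?_⟩
  · have := (hF κ ζ0 hκ le_rfl hζ0).1
    exact this
  · have := (hF κ ζ0 hκ le_rfl hζ0).2
    exact this
  · intro l hl1 hlκ
    obtain ⟨m, rfl⟩ : ∃ m, l = m + 1 := ⟨l - 1, by omega⟩
    have hmκ : m < κ := by omega
    have hAm : traj m ∈ A (κ - m) := htraj m (by omega)
    obtain ⟨hi, hb⟩ := hF (κ - m) (traj m) (by omega) (by omega) hAm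
    have hmem := key (κ - m) (F (κ - m) (traj m)) (traj m) hb
    rw [← hsucc] at hmem
    have hsub := hballj (κ - m) (by omega) (by omega) _ hi
    rw [hidx m, show κ - (m + 1) + 1 = κ - m from by omega]
    refine ⟨hi, hmem, ?_⟩
    rwa [show κ - (m + 1) = κ - m - 1 from by omega]
  · have : traj κ ∈ A 0 := by
      have := htraj κ le_rfl
      rwa [Nat.sub_self] at this
    rw [hA0, Set.mem_iUnion₂] at this
    obtain ⟨i, hi, hb⟩ := this
    exact hball0 i hi hb
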